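/- TeamCTL is sensitive to multiplicities: there exist a finite Kripke structure 𝒦, a CTL formula φ, and two teams T, T' of 𝒦 with the same support (the same underlying set of worlds) such that 𝒦, T ⊨ φ but 𝒦, T' ⊭ φ. (A witness is a world w that branches into two chains, one with p at its first world and one with p at its second world, φ = A[(p∨¬p)Up] (i.e., AF p), T = ⟦w⟧ and T' = ⟦w, w⟧.) -/

import Mathlib

namespace TeamCTL

/-- A Kripke structure: a finite set of worlds, a left-total transition relation,
and a labeling function. -/
structure Kripke (AP : Type) where
  W : Type
  [instFin : Fintype W]
  R : W → W → Prop
  leftTotal : ∀ w : W, ∃ w' : W, R w w'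
  η : W → Set AP

attribute [instance] Kripke.instFin

/-- CTL formulae in negation normal form. -/
inductive CTL (AP : Type) : Type
  | atom : AP → CTL AP
  | natom : AP → CTL AP
  | conj : CTL AP → CTL AP → CTL AP
  | disj : CTL AP → CTL AP → CTL AP
  | ex : CTL AP → CTL AP
  | ax : CTL AP → CTL AP
  | eu : CTL AP → CTL AP → CTL AP
  | au : CTL AP → CTL AP → CTL AP
  | er : CTL AP → CTL AP → CTL AP
  | ar : CTL AP → CTL AP → CTL AP

variable {AP : Type}

/-- `π` is a path of `K` starting at the world `w`. -/
def IsPathFrom (K : Kripke AP) (w : K.W) (π : ℕ → K.W) : Prop :=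
  π 0 = w ∧ ∀ i : ℕ, K.R (π i) (π (i + 1))

/-- A team of `K` is a finite multiset of worlds, represented as a list
(the positions of the list play the role of the indices of the indexed multiset;
multiset equality is list permutation).  A `T`-compatible function assigns to
each (indexed) element of the team a path starting at that world. -/
def Compatible (K : Kripke AP) (T : List K.W) (f : Fin T.length → ℕ → K.W) : Prop :=
  ∀ i : Fin T.length, IsPathFrom K (T.get i) (f i)

/-- `T[f,n]`: the team obtained by synchronously proceeding to the `n`-th element
of each chosen path. -/
def step (K : Kripke AP) {T : List K.W} (f : Fin T.length → ℕ → K.W) (n : ℕ) : List K.W :=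
  List.ofFn fun i => f i n

/-- Team semantics for CTL: `TSat K φ T` means `K, T ⊨ φ`. -/
def TSat (K : Kripke AP) : CTL AP → List K.W → Prop
  | .atom p, T => ∀ w ∈ T, p ∈ K.η w
  | .natom p, T => ∀ w ∈ T, p ∉ K.η w
  | .conj φ ψ, T => TSat K φ T ∧ TSat K ψ T
  | .disj φ ψ, T => ∃ T₁ T₂ : List K.W, (T₁ ++ T₂).Perm T ∧ TSat K φ T₁ ∧ TSat K ψ T₂
  | .ex φ, T => ∃ f, Compatible K T f ∧ TSat K φ (step K f 1)
  | .ax φ, T => ∀ f, Compatible K T f → TSat K φ (step K f 1)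
  | .eu φ ψ, T => ∃ f, Compatible K T f ∧ ∃ k : ℕ,
      TSat K ψ (step K f k) ∧ ∀ j : ℕ, 1 ≤ j → j < k → TSat K φ (step K f j)
  | .au φ ψ, T => ∀ f, Compatible K T f → ∃ k : ℕ,
      TSat K ψ (step K f k) ∧ ∀ j : ℕ, 1 ≤ j → j < k → TSat K φ (step K f j)
  | .er φ ψ, T => ∃ f, Compatible K T f ∧ ∀ k : ℕ,
      TSat K ψ (step K f k) ∨ ∃ j : ℕ, 1 ≤ j ∧ j < k ∧ TSat K φ (step K f j)
  | .ar φ ψ, T => ∀ f, Compatible K T f → ∀ k : ℕ,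
      TSat K ψ (step K f k) ∨ ∃ j : ℕ, 1 ≤ j ∧ j < k ∧ TSat K φ (step K f j)

/-- Classical (pointed) semantics for CTL: `CSat K φ w` means `K, w ⊨ φ`. -/
def CSat (K : Kripke AP) : CTL AP → K.W → Prop
  | .atom p, w => p ∈ K.η w
  | .natom p, w => p ∉ K.η w
  | .conj φ ψ, w => CSat K φ w ∧ CSat K ψ w
  | .disj φ ψ, w => CSat K φ w ∨ CSat K ψ w
  | .ex φ, w => ∃ π, IsPathFrom K w π ∧ CSat K φ (π 1)
  | .ax φ, w => ∀ π, IsPathFrom K w π → CSat K φ (π 1)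
  | .eu φ ψ, w => ∃ π, IsPathFrom K w π ∧ ∃ k : ℕ, CSat K ψ (π k) ∧ ∀ j < k, CSat K φ (π j)
  | .au φ ψ, w => ∀ π, IsPathFrom K w π → ∃ k : ℕ, CSat K ψ (π k) ∧ ∀ j < k, CSat K φ (π j)
  | .er φ ψ, w => ∃ π, IsPathFrom K w π ∧ ∀ k : ℕ, CSat K ψ (π k) ∨ ∃ j < k, CSat K φ (π j)
  | .ar φ ψ, w => ∀ π, IsPathFrom K w π → ∀ k : ℕ, CSat K ψ (π k) ∨ ∃ j < k, CSat K φ (π j)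

/-- `EF φ := E[(p ∨ ¬p) U φ]`. -/
def EF (p : AP) (φ : CTL AP) : CTL AP := .eu (.disj (.atom p) (.natom p)) φ

/-- The transition relation of the witness structure: world 0 branches into
two chains `0 → 1 → 2 → 2 → ⋯` (with `p` at `1`) and `0 → 3 → 4 → 4 → ⋯`
(with `p` at `4`). -/
def r (i j : Fin 5) : Prop :=
  (i = 0 ∧ (j = 1 ∨ j = 3)) ∨ (i = 1 ∧ j = 2) ∨ (i = 2 ∧ j = 2) ∨
    (i = 3 ∧ j = 4) ∨ (i = 4 ∧ j = 4)

instance (i j : Fin 5) : Decidable (r i j) := by unfold r; infer_instance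

/-- The witness Kripke structure. -/
@[reducible] def myK : Kripke ℕ where
  W := Fin 5
  R := r
  leftTotal := by decide
  η := fun w => {n | n = 0 ∧ (w = 1 ∨ w = 4)}

lemma mem_eta (w : Fin 5) : 0 ∈ myK.η w ↔ (w = 1 ∨ w = 4) := by
  simp [myK]

/-- The path `0, 1, 2, 2, 2, …`. -/
def pa : ℕ → Fin 5 := fun n => if n = 0 then 0 else if n = 1 then 1 else 2

/-- The path `0, 3, 4, 4, 4, …`. -/
def pb : ℕ → Fin 5 := fun n => if n = 0 then 0 else if n = 1 then 3 else 4

lemma pa_path : IsPathFrom myK ((0 : Fin 5) : myK.W) pa := by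
  refine ⟨rfl, fun i => ?_⟩
  rcases i with _ | _ | i
  · exact Or.inl ⟨rfl, Or.inl rfl⟩
  · exact Or.inr (Or.inl ⟨rfl, rfl⟩)
  · exact Or.inr (Or.inr (Or.inl ⟨rfl, rfl⟩))

lemma pb_path : IsPathFrom myK ((0 : Fin 5) : myK.W) pb := by
  refine ⟨rfl, fun i => ?_⟩
  rcases i with _ | _ | i
  · exact Or.inl ⟨rfl, Or.inr rfl⟩
  · exact Or.inr (Or.inr (Or.inr (Or.inl ⟨rfl, rfl⟩)))
  · exact Or.inr (Or.inr (Or.inr (Or.inr ⟨rfl, rfl⟩)))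

/-- TeamCTL is sensitive to multiplicities: there are a finite
Kripke structure `𝒦`, a CTL formula `φ`, and teams `T, T'` with the same
support such that `𝒦,T ⊨ φ` but `𝒦,T' ⊭ φ`. -/
theorem sensitive_to_multiplicities :
    ∃ (K : Kripke ℕ) (φ : CTL ℕ) (T T' : List K.W),
      (∀ w : K.W, w ∈ T ↔ w ∈ T') ∧ TSat K φ T ∧ ¬ TSat K φ T' := by
  refine ⟨myK, .au (.disj (.atom 0) (.natom 0)) (.atom 0),
    [(0 : Fin 5)], [(0 : Fin 5), (0 : Fin 5)], by simp, ?_, ?_⟩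
  · -- `[0] ⊨ AF p`
    intro f hf
    set π : ℕ → Fin 5 := f ⟨0, by norm_num⟩ with hπdef
    have hπ : IsPathFrom myK ((0 : Fin 5) : myK.W) π := hf ⟨0, by norm_num⟩
    have hstep : ∀ n, step myK f n = [π n] := fun n => rfl
    have h1 : π 1 = 1 ∨ π 1 = 3 := by
      have h := hπ.2 0
      rw [hπ.1] at h
      rcases h with ⟨_, h⟩ | ⟨h, _⟩ | ⟨h, _⟩ | ⟨h, _⟩ | ⟨h, _⟩
      · exact h
      all_goals exact absurd h (by decide)
    rcases h1 with h1 | h1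
    · refine ⟨1, ?_, ?_⟩
      · intro w hw
        rw [hstep 1] at hw
        simp at hw
        rw [hw, h1, mem_eta]
        exact Or.inl rfl
      · intro j hj hj'; omega
    · have h2 : π 2 = 4 := by
        have h := hπ.2 1
        rw [h1] at h
        rcases h with ⟨h, _⟩ | ⟨h, _⟩ | ⟨h, _⟩ | ⟨_, h⟩ | ⟨h, _⟩
        · exact absurd h (by decide)
        · exact absurd h (by decide)
        · exact absurd h (by decide)
        · exact h
        · exact absurd h (by decide)
      refine ⟨2, ?_, ?_⟩
      · intro w hw
        rw [hstep 2] at hw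
        simp at hw
        rw [hw, h2, mem_eta]
        exact Or.inr rfl
      · intro j hj hj'
        have hj1 : j = 1 := by omega
        subst hj1
        refine ⟨[], [π 1], ?_, ?_, ?_⟩
        · rw [hstep 1]; exact List.Perm.refl _
        · intro w hw; simp at hw
        · intro w hw
          simp at hw
          rw [hw, h1, mem_eta]
          decide
  · -- `[0, 0] ⊭ AF p`
    intro hT
    have hcomp : Compatible myK [((0 : Fin 5) : myK.W), (0 : Fin 5)]
        (fun i => if i.val = 0 then pa else pb) := by
      intro i
      fin_cases i
      · exact pa_path
      · exact pb_path
    obtain ⟨k, hk, -⟩ := hT _ hcomp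
    have hstep2 : ∀ n, step myK
        (fun i : Fin ([((0 : Fin 5) : myK.W), 0].length) => if i.val = 0 then pa else pb) n
        = [pa n, pb n] := fun n => rfl
    rcases k with _ | _ | k
    · have := hk (pa 0) (by rw [hstep2 0]; exact List.mem_cons_self)
      rw [mem_eta] at this
      exact absurd this (by decide)
    · have := hk (pb 1) (by rw [hstep2 1]; simp)
      rw [mem_eta] at this
      exact absurd this (by decide)
    · have := hk (pa (k + 2)) (by rw [hstep2 (k + 2)]; exact List.mem_cons_self)
      rw [mem_eta] at this
      have hpa : pa (k + 2) = 2 := rfl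
      rw [hpa] at this
      exact absurd this (by decide)

end TeamCTL
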